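/- Let H be the (k+1) × n matrix whose first row is (C_s, C_l, ..., C_L) and whose remaining rows form the identity pattern attaching one measurement to each variable: row b+1 has 1 in column b and 0 elsewhere. Let R = diag(v, v_s, v_l, ..., v_L) with all entries positive. Then the (s,s) entry of (Hᵀ R⁻¹ H)⁻¹ satisfies 1/[(Hᵀ R⁻¹ H)⁻¹]_{ss} = 1/v_s + C_s² / (v + Σ_{b ≠ s} C_b² v_b), assuming C_s ≠ 0. -/

import Mathlib

open Matrix Finset

/-- WLS posterior-variance decomposition: for the stacked matrix `H` whose first row
is `(C_s, C_l, …, C_L)` and whose remaining rows are the identity, with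
`R = diag(v, v_s, v_l, …, v_L)`, the `(s,s)` entry of `(Hᵀ R⁻¹ H)⁻¹` satisfies
`1/[(Hᵀ R⁻¹ H)⁻¹]_{ss} = 1/v_s + C_s² / (v + ∑_{b ≠ s} C_b² v_b)`. -/
theorem wls_variance_decomposition {n : ℕ} (C : Fin n → ℝ) (s : Fin n)
    (hCs : C s ≠ 0) (v : ℝ) (hv : 0 < v) (vd : Fin n → ℝ) (hvd : ∀ b, 0 < vd b)
    (H : Matrix (Unit ⊕ Fin n) (Fin n) ℝ)
    (hH : H = Matrix.of fun r c =>
      Sum.elim (fun _ => C c) (fun b => if b = c then (1 : ℝ) else 0) r)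
    (R : Matrix (Unit ⊕ Fin n) (Unit ⊕ Fin n) ℝ)
    (hR : R = Matrix.diagonal (Sum.elim (fun _ => v) vd)) :
    1 / ((Hᵀ * R⁻¹ * H)⁻¹ s s)
      = 1 / vd s + (C s) ^ 2 / (v + ∑ b ∈ Finset.univ.erase s, (C b) ^ 2 * vd b) := by
  obtain ⟨T, hT⟩ : ∃ T : ℝ, T = v + ∑ b : Fin n, (C b) ^ 2 * vd b := ⟨_, rfl⟩
  have hQnn : (0:ℝ) ≤ ∑ b : Fin n, (C b) ^ 2 * vd b :=
    Finset.sum_nonneg fun b _ => mul_nonneg (sq_nonneg _) (hvd b).le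
  have hTpos : 0 < T := by rw [hT]; linarith
  have hTne : T ≠ 0 := hTpos.ne'
  have hvne : v ≠ 0 := hv.ne'
  -- R⁻¹
  have hRinv : R⁻¹ = Matrix.diagonal (Sum.elim (fun _ => v⁻¹) (fun b => (vd b)⁻¹)) := by
    apply Matrix.inv_eq_right_inv
    rw [hR, Matrix.diagonal_mul_diagonal]
    have h1 : (fun x : Unit ⊕ Fin n => Sum.elim (fun _ => v) vd x *
        Sum.elim (fun _ => v⁻¹) (fun b => (vd b)⁻¹) x) = fun _ => (1:ℝ) := by
      funext x
      cases x with
      | inl u => simp [mul_inv_cancel₀ hvne]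
      | inr b => simp [mul_inv_cancel₀ (hvd b).ne']
    rw [h1, Matrix.diagonal_one]
  -- A = Hᵀ R⁻¹ H
  have hA : ∀ i j, (Hᵀ * R⁻¹ * H) i j
      = C i * C j / v + (if i = j then (vd i)⁻¹ else 0) := by
    intro i j
    rw [hRinv, hH, Matrix.mul_apply]
    simp only [Matrix.mul_diagonal, Matrix.transpose_apply, Matrix.of_apply]
    rw [Fintype.sum_sum_type]
    simp only [ite_mul, mul_ite, Finset.sum_ite_eq, Finset.sum_ite_eq', Finset.mem_univ,
      if_true, one_mul, mul_one, zero_mul, mul_zero, div_eq_mul_inv]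
    rcases eq_or_ne i j with rfl | hij
    · simp; ring
    · simp [hij, hij.symm]; ring
  -- B = Sherman–Morrison inverse
  obtain ⟨B, hB⟩ : ∃ B : Matrix (Fin n) (Fin n) ℝ, B = Matrix.of fun k j =>
    (if k = j then vd k else 0) - vd k * C k * C j * vd j / T := ⟨_, rfl⟩
  have hAB : (Hᵀ * R⁻¹ * H) * B = 1 := by
    ext i j
    rw [Matrix.mul_apply]
    have hterm : ∀ k, (Hᵀ * R⁻¹ * H) i k * B k j
        = (if k = j then C i * C j * vd j / v else 0)
        + (if i = k then (if k = j then (1:ℝ) else 0) else 0)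
        - (C i * C j * vd j / (v * T)) * ((C k) ^ 2 * vd k)
        - (if i = k then C i * C j * vd j / T else 0) := by
      intro k
      rw [hA, hB]
      simp only [Matrix.of_apply]
      have hi := (hvd i).ne'
      have hj := (hvd j).ne'
      have hk := (hvd k).ne'
      by_cases h1 : i = k <;> by_cases h2 : k = j
      · have h3 : i = j := h1.trans h2
        simp [h1, h2, h3]; field_simp; ring
      · have h3 : i ≠ j := fun h => h2 (h1.symm.trans h)
        simp [h1, h2, h3]; field_simp; ring
      · have h3 : i ≠ j := fun h => h1 (h.trans h2.symm)
        simp [h1, h2, h3]; field_simp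
      · simp [h1, h2]; field_simp
    rw [Finset.sum_congr rfl fun k _ => hterm k]
    simp only [Finset.sum_sub_distrib, Finset.sum_add_distrib, Finset.sum_ite_eq,
      Finset.sum_ite_eq', Finset.mem_univ, if_true, ← Finset.mul_sum]
    have hQ : ∑ k : Fin n, (C k) ^ 2 * vd k = T - v := by rw [hT]; ring
    rw [hQ, Matrix.one_apply]
    by_cases hij : i = j <;> simp [hij] <;> field_simp <;> ring
  have hinv : (Hᵀ * R⁻¹ * H)⁻¹ = B := Matrix.inv_eq_right_inv hAB
  obtain ⟨S, hS⟩ : ∃ S : ℝ,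
      S = v + ∑ b ∈ Finset.univ.erase s, (C b) ^ 2 * vd b := ⟨_, rfl⟩
  have hsum : T = S + (C s)^2 * vd s := by
    rw [hT, hS, ← Finset.add_sum_erase _ _ (Finset.mem_univ s)]; ring
  have hSpos : 0 < S := by
    have h2 : (0:ℝ) ≤ ∑ b ∈ Finset.univ.erase s, (C b) ^ 2 * vd b :=
      Finset.sum_nonneg fun b _ => mul_nonneg (sq_nonneg _) (hvd b).le
    rw [hS]; linarith
  have hSne : S ≠ 0 := hSpos.ne'
  rw [hinv, ← hS]
  have hBss : B s s = vd s - vd s * C s * C s * vd s / T := by rw [hB]; simp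
  have hvds := (hvd s).ne'
  have hTne' : S + (C s)^2 * vd s ≠ 0 := by rw [← hsum]; exact hTne
  have hd : vd s - vd s * C s * C s * vd s / (S + (C s)^2 * vd s)
      = vd s * S / (S + (C s)^2 * vd s) := by
      rw [eq_div_iff hTne', sub_mul, div_mul_cancel₀ _ hTne']; ring
  rw [hBss, hsum, hd, one_div_div, div_add_div _ _ hvds hSne]
  congr 1
  ring
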